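/- There exists a constant c > 0 (independent of λ) such that for all M > 0 and λ ≥ 0, the second r*-derivative of Q_λ at its critical point r(λ) satisfies |Q_λ''(r(λ))| ≥ c(1 + λ²)/M⁴, i.e., the nondegeneracy is uniform and of order λ² as λ → ∞ after scaling by M. -/

import Mathlib

lemma inner_hasDeriv (M lam : ℝ) {s : ℝ} (hs : s ≠ 0) :
    HasDerivAt (fun s : ℝ => (1 - 2*M/s) * (2*M/s^3 + lam^2/s^2))
      (-2*(lam^2*s^2 - 3*M*(lam^2-1)*s - 8*M^2)/s^5) s := by
  have h1 : HasDerivAt (fun s : ℝ => 1 - 2*M/s)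
      (0 - (0 * s - 2*M*1)/s^2) s :=
    (hasDerivAt_const s 1).sub
      (((hasDerivAt_const s (2*M)).div (hasDerivAt_id' (x := s)) hs))
  have h2 : HasDerivAt (fun s : ℝ => 2*M/s^3 + lam^2/s^2)
      ((0 * s^3 - 2*M*(3*s^2))/(s^3)^2 + (0 * s^2 - lam^2*(2*s^1))/(s^2)^2) s := by
    have a1 := (hasDerivAt_const s (2*M)).div (hasDerivAt_pow 3 s) (pow_ne_zero 3 hs)
    have a2 := (hasDerivAt_const s (lam^2)).div (hasDerivAt_pow 2 s) (pow_ne_zero 2 hs)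
    refine (a1.add a2).congr_deriv ?_
    simp
  have := h1.mul h2
  refine this.congr_deriv ?_
  field_simp
  ring

lemma outer_hasDeriv (M lam : ℝ) {r : ℝ} (hr : r ≠ 0) :
    HasDerivAt (fun r : ℝ =>
        -2*((r - 2*M)*(lam^2*r^2 - 3*M*(lam^2-1)*r - 8*M^2))/r^6)
      ((-2*((1 - 0)*(lam^2*r^2 - 3*M*(lam^2-1)*r - 8*M^2)
          + (r - 2*M)*(lam^2*(2*r^1) - 3*M*(lam^2-1)*1 - 0)) * r^6
        - (-2*((r - 2*M)*(lam^2*r^2 - 3*M*(lam^2-1)*r - 8*M^2))) * (6*r^5))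
        / (r^6)^2) r := by
  have hP : HasDerivAt (fun r : ℝ => lam^2*r^2 - 3*M*(lam^2-1)*r - 8*M^2)
      (lam^2*(2*r^1) - 3*M*(lam^2-1)*1 - 0) r :=
    (((hasDerivAt_pow 2 r).const_mul (lam^2)).sub
      ((hasDerivAt_id' (x := r)).const_mul (3*M*(lam^2-1)))).sub (hasDerivAt_const r (8*M^2))
  have hlin : HasDerivAt (fun r : ℝ => r - 2*M) (1 - 0) r :=
    (hasDerivAt_id' (x := r)).sub (hasDerivAt_const r (2*M))
  have hN := (hlin.mul hP).const_mul (-2)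
  exact hN.div (hasDerivAt_pow 6 r) (pow_ne_zero 6 hr)

theorem uniform_nondegeneracy :
    ∃ c : ℝ, 0 < c ∧ ∀ M lam rl : ℝ, 0 < M → 0 ≤ lam →
      lam ^ 2 * rl ^ 2 - 3 * M * (lam ^ 2 - 1) * rl - 8 * M ^ 2 = 0 →
      rl ∈ Set.Icc (8 * M / 3) (3 * M) →
      c * (1 + lam ^ 2) / M ^ 4 ≤
        |(1 - 2 * M / rl) *
          deriv (fun r : ℝ => (1 - 2 * M / r) *
            deriv (fun s : ℝ => (1 - 2 * M / s) * (2 * M / s ^ 3 + lam ^ 2 / s ^ 2)) r) rl| := by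
  refine ⟨8/19683, by norm_num, ?_⟩
  intro M lam rl hM hlam hcrit hrl
  obtain ⟨hlo, hhi⟩ := hrl
  have hr0 : 0 < rl := lt_of_lt_of_le (by linarith) hlo
  have hev : (fun r : ℝ => (1 - 2 * M / r) *
        deriv (fun s : ℝ => (1 - 2 * M / s) * (2 * M / s ^ 3 + lam ^ 2 / s ^ 2)) r)
      =ᶠ[nhds rl]
      (fun r : ℝ => -2*((r - 2*M)*(lam^2*r^2 - 3*M*(lam^2-1)*r - 8*M^2))/r^6) := by
    filter_upwards [eventually_gt_nhds hr0] with r hr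
    rw [(inner_hasDeriv M lam hr.ne').deriv]
    field_simp
  rw [hev.deriv_eq, (outer_hasDeriv M lam hr0.ne').deriv, hcrit]
  have hval : (1 - 2 * M / rl) *
      ((-2*((1 - 0)*0 + (rl - 2*M)*(lam^2*(2*rl^1) - 3*M*(lam^2-1)*1 - 0)) * rl^6
        - (-2*((rl - 2*M)*0)) * (6*rl^5)) / (rl^6)^2)
      = -(2*(rl - 2*M)^2*(2*lam^2*rl - 3*M*(lam^2-1))/rl^7) := by
    field_simp
    ring
  rw [hval]
  have hK : M*(1+lam^2) ≤ 2*lam^2*rl - 3*M*(lam^2-1) := by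
    nlinarith [mul_le_mul_of_nonneg_left hlo (sq_nonneg lam)]
  have hKpos : (0:ℝ) < 2*lam^2*rl - 3*M*(lam^2-1) := by nlinarith [sq_nonneg lam]
  have habs : |-(2*(rl - 2*M)^2*(2*lam^2*rl - 3*M*(lam^2-1))/rl^7)|
      = 2*(rl - 2*M)^2*(2*lam^2*rl - 3*M*(lam^2-1))/rl^7 := by
    rw [abs_neg, abs_of_nonneg]
    apply div_nonneg _ (by positivity)
    nlinarith [sq_nonneg (rl - 2*M)]
  rw [habs, div_le_div_iff₀ (by positivity) (by positivity)]
  have h7 : rl^7 ≤ 2187*M^7 := by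
    calc rl^7 ≤ (3*M)^7 := pow_le_pow_left₀ hr0.le hhi 7
      _ = 2187*M^7 := by ring
  have hsq : (2*M/3)^2 ≤ (rl - 2*M)^2 := pow_le_pow_left₀ (by linarith) (by linarith) 2
  calc 8/19683 * (1 + lam^2) * rl^7 ≤ 8/19683 * (1 + lam^2) * (2187*M^7) := by
        have : (0:ℝ) ≤ 8/19683 * (1 + lam^2) := by positivity
        nlinarith
    _ = 2*((2*M/3)^2)*(M*(1+lam^2))*M^4 := by ring
    _ ≤ 2*((rl - 2*M)^2)*(2*lam^2*rl - 3*M*(lam^2-1))*M^4 := by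
        have h1 : (0:ℝ) ≤ (2*M/3)^2 := by positivity
        have h2 : (0:ℝ) ≤ M*(1+lam^2) := by positivity
        nlinarith [mul_le_mul hsq hK h2 (sq_nonneg (rl - 2*M)), pow_pos hM 4]
    _ = 2*(rl - 2*M)^2*(2*lam^2*rl - 3*M*(lam^2-1))*M^4 := by ring
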